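/- Under the hypotheses of the main theorem together with h3 (for a fixed 0 ≤ p ≤ 1), the Gauss–Newton iterates satisfy ‖x_{k+1} − x*‖ ≤ (t_{k+1}/t_k^{p+1})·‖x_k − x*‖^{p+1} ≤ (t_1/t_0^{p+1})·‖x_k − x*‖^{p+1} for all k, where t_0 = ‖x_0 − x*‖ and t_{k+1} = |t_k − f(t_k)/f'(t_k)|; in particular ‖x_k − x*‖ ≤ t_k for all k. -/

import Mathlib

set_option maxHeartbeats 1000000

/-- Moore–Penrose inverse of an injective closed-range operator: A† = (A*A)⁻¹ A*. -/
noncomputable def pinv {X Y : Type*} [NormedAddCommGroup X] [InnerProductSpace ℝ X]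
    [CompleteSpace X] [NormedAddCommGroup Y] [InnerProductSpace ℝ Y] [CompleteSpace Y]
    (A : X →L[ℝ] Y) : Y →L[ℝ] X :=
  (Ring.inverse ((ContinuousLinearMap.adjoint A).comp A)).comp (ContinuousLinearMap.adjoint A)

open ContinuousLinearMap in
lemma pinv_lemma {X Y : Type*} [NormedAddCommGroup X] [InnerProductSpace ℝ X]
    [CompleteSpace X] [NormedAddCommGroup Y] [InnerProductSpace ℝ Y] [CompleteSpace Y]
    (A : X →L[ℝ] Y) (c : ℝ) (hc : 0 < c) (hA : ∀ u, c * ‖u‖ ≤ ‖A u‖) :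
    (∀ u, pinv A (A u) = u) ∧ (∀ z, ‖pinv A z‖ ≤ ‖z‖ / c) := by
  set T : X →L[ℝ] X := (ContinuousLinearMap.adjoint A).comp A with hT
  have hTuu : ∀ u, inner ℝ (T u) u = (‖A u‖ : ℝ) ^ 2 := by
    intro u
    rw [hT, ContinuousLinearMap.comp_apply, ContinuousLinearMap.adjoint_inner_left]
    exact real_inner_self_eq_norm_sq (A u)
  have hlow : ∀ u, c ^ 2 * ‖u‖ ≤ ‖T u‖ := by
    intro u
    rcases eq_or_ne u 0 with h | h
    · simp [h]
    · have hu : (0:ℝ) < ‖u‖ := norm_pos_iff.2 h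
      have h1 : c ^ 2 * ‖u‖ ^ 2 ≤ ‖A u‖ ^ 2 := by
        have h := hA u
        nlinarith [mul_le_mul h h (by positivity : (0:ℝ) ≤ c * ‖u‖) (norm_nonneg (A u))]
      have h2 : (‖A u‖ : ℝ) ^ 2 ≤ ‖T u‖ * ‖u‖ := by
        rw [← hTuu u]; exact real_inner_le_norm (T u) u
      have := h1.trans h2
      nlinarith
  have hker : LinearMap.ker (T : X →ₗ[ℝ] X) = ⊥ := by
    rw [LinearMap.ker_eq_bot']
    intro u hu
    have := hlow u
    rw [ContinuousLinearMap.coe_coe] at hu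
    rw [hu] at this
    simp only [norm_zero] at this
    have hc2 : (0:ℝ) < c ^ 2 := by positivity
    have : ‖u‖ ≤ 0 := by nlinarith
    exact norm_le_zero_iff.1 this
  have hanti : AntilipschitzWith ((c^2)⁻¹).toNNReal T := by
    apply T.antilipschitz_of_bound
    intro u
    have := hlow u
    have hc2 : (0:ℝ) < c ^ 2 := by positivity
    rw [Real.coe_toNNReal _ (by positivity), inv_mul_eq_div, le_div_iff₀ hc2]
    nlinarith
  have hclosedT : IsClosed (Set.range T) := hanti.isClosed_range T.uniformContinuous
  have hrange : LinearMap.range (T : X →ₗ[ℝ] X) = ⊤ := by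
    have hclosed' : IsClosed ((LinearMap.range (T : X →ₗ[ℝ] X) : Submodule ℝ X) : Set X) := by
      rw [LinearMap.coe_range]; exact hclosedT
    have : CompleteSpace (LinearMap.range (T : X →ₗ[ℝ] X)) := hclosed'.completeSpace_coe
    rw [← Submodule.orthogonal_eq_bot_iff]
    rw [Submodule.eq_bot_iff]
    intro y hy
    have h0 : inner ℝ (T y) y = (0:ℝ) := by
      exact (Submodule.mem_orthogonal _ y).1 hy (T y) (LinearMap.mem_range_self _ y)
    rw [hTuu y] at h0
    have hAy : ‖A y‖ = 0 := by nlinarith [norm_nonneg (A y)]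
    have := hA y
    rw [hAy] at this
    have : ‖y‖ ≤ 0 := by nlinarith
    exact norm_le_zero_iff.1 this
  let e := ContinuousLinearEquiv.ofBijective T hker hrange
  have hcoe : ∀ u, e u = T u := fun u => rfl
  have hunit : IsUnit T := by
    refine ⟨⟨T, (e.symm : X →L[ℝ] X), ?_, ?_⟩, rfl⟩
    · ext u
      simp only [ContinuousLinearMap.mul_apply, ContinuousLinearMap.one_apply,
        ContinuousLinearMap.coe_coe]
      exact e.apply_symm_apply u
    · ext u
      simp only [ContinuousLinearMap.mul_apply, ContinuousLinearMap.one_apply,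
        ContinuousLinearMap.coe_coe]
      exact e.symm_apply_apply u
  have hmul1 : ∀ u, Ring.inverse T (T u) = u := by
    intro u
    have : (Ring.inverse T * T) u = u := by rw [Ring.inverse_mul_cancel _ hunit]; rfl
    rwa [ContinuousLinearMap.mul_apply] at this
  have hmul2 : ∀ u, T (Ring.inverse T u) = u := by
    intro u
    have : (T * Ring.inverse T) u = u := by rw [Ring.mul_inverse_cancel _ hunit]; rfl
    rwa [ContinuousLinearMap.mul_apply] at this
  constructor
  · intro u
    show (Ring.inverse T) (ContinuousLinearMap.adjoint A (A u)) = u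
    exact hmul1 u
  · intro z
    set u : X := pinv A z with hu
    have hTu : T u = ContinuousLinearMap.adjoint A z := by
      have : u = Ring.inverse T (ContinuousLinearMap.adjoint A z) := rfl
      rw [this, hmul2]
    have hAu : ‖A u‖ ≤ ‖z‖ := by
      have h1 : (‖A u‖:ℝ) ^ 2 = inner ℝ z (A u) := by
        rw [← hTuu u, hTu, ContinuousLinearMap.adjoint_inner_left]
      have h2 : inner ℝ z (A u) ≤ ‖z‖ * ‖A u‖ := real_inner_le_norm z (A u)
      rcases le_or_gt ‖A u‖ 0 with h | h
      · exact h.trans (norm_nonneg z)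
      · nlinarith
    have := hA u
    rw [le_div_iff₀ hc]
    nlinarith

theorem stmt15
    {X Y : Type*} [NormedAddCommGroup X] [InnerProductSpace ℝ X] [CompleteSpace X]
    [NormedAddCommGroup Y] [InnerProductSpace ℝ Y] [CompleteSpace Y]
    (Ω : Set X) (hΩ : IsOpen Ω) (F : X → Y) (Fp : X → X →L[ℝ] Y)
    (hF : ∀ x ∈ Ω, HasFDerivAt F (Fp x) x)
    (hclosed : ∀ x ∈ Ω, IsClosed (Set.range ((Fp x) : X → Y)))
    (xs : X) (hxs : xs ∈ Ω) (hFxs : F xs = 0) (hinj : Function.Injective ((Fp xs) : X → Y))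
    (R : ℝ) (hR : 0 < R)
    (β κ : ℝ) (hβ : β = ‖pinv (Fp xs)‖)
    (hκ : κ = sSup {t ∈ Set.Ico 0 R | Metric.ball xs t ⊆ Ω})
    (f fp : ℝ → ℝ)
    (hderiv : ∀ t ∈ Set.Ico (0:ℝ) R, HasDerivWithinAt f (fp t) (Set.Ico 0 R) t)
    (hcont : ContinuousOn fp (Set.Ico 0 R))
    (hmaj : ∀ τ ∈ Set.Icc (0:ℝ) 1, ∀ x ∈ Metric.ball xs κ,
      β * ‖Fp x - Fp (xs + τ • (x - xs))‖ ≤ fp ‖x - xs‖ - fp (τ * ‖x - xs‖))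
    (hf0 : f 0 = 0) (hfp0 : fp 0 = -1) (hmono : StrictMonoOn fp (Set.Ico 0 R))
    (ν ρ r : ℝ) (hν : ν = sSup {t ∈ Set.Ico 0 R | fp t < 0})
    (hρ : ρ = sSup {δ : ℝ | δ ∈ Set.Ioo 0 ν ∧ ∀ t ∈ Set.Ioo 0 δ, (f t / fp t - t) / t < 1})
    (hr : r = min κ ρ)
    (p : ℝ) (hp0 : 0 ≤ p) (hp1 : p ≤ 1)
    (h3 : StrictMonoOn (fun t => (f t / fp t - t) / t ^ (p + 1)) (Set.Ioo 0 ν))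
    (x : ℕ → X) (hx0 : x 0 ∈ Metric.ball xs r) (hx0ne : x 0 ≠ xs)
    (hxrec : ∀ k, x (k + 1) = x k - pinv (Fp (x k)) (F (x k)))
    (t : ℕ → ℝ) (ht0 : t 0 = ‖x 0 - xs‖)
    (htrec : ∀ k, t (k + 1) = |t k - f (t k) / fp (t k)|) :
    (∀ k, ‖x k - xs‖ ≤ t k) ∧
      ∀ k, ‖x (k + 1) - xs‖ ≤ (t (k + 1) / t k ^ (p + 1)) * ‖x k - xs‖ ^ (p + 1) ∧
        (t (k + 1) / t k ^ (p + 1)) * ‖x k - xs‖ ^ (p + 1) ≤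
          (t 1 / t 0 ^ (p + 1)) * ‖x k - xs‖ ^ (p + 1) := by
  -- basic positivity facts
  have hrpos : 0 < r := lt_of_le_of_lt dist_nonneg (Metric.mem_ball.1 hx0)
  have hκpos : 0 < κ := lt_of_lt_of_le hrpos (hr ▸ min_le_left _ _)
  have hρpos : 0 < ρ := lt_of_lt_of_le hrpos (hr ▸ min_le_right _ _)
  have hrκ : r ≤ κ := hr ▸ min_le_left _ _
  have hrρ : r ≤ ρ := hr ▸ min_le_right _ _
  -- κ facts
  have hκmemset : (0:ℝ) ∈ {t ∈ Set.Ico 0 R | Metric.ball xs t ⊆ Ω} := by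
    refine ⟨⟨le_refl _, hR⟩, ?_⟩
    simp [Metric.ball_eq_empty.2 (le_refl (0:ℝ))]
  have hκne : Set.Nonempty {t ∈ Set.Ico 0 R | Metric.ball xs t ⊆ Ω} := ⟨0, hκmemset⟩
  have hκR : κ ≤ R := by
    rw [hκ]
    exact csSup_le hκne (fun b hb => le_of_lt hb.1.2)
  have hκball : Metric.ball xs κ ⊆ Ω := by
    intro y hy
    rw [Metric.mem_ball] at hy
    obtain ⟨tt, htt, hytt⟩ := exists_lt_of_lt_csSup hκne (hκ ▸ hy)
    exact htt.2 (Metric.mem_ball.2 hytt)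
  -- ν facts
  have hνne : Set.Nonempty {t ∈ Set.Ico 0 R | fp t < 0} :=
    ⟨0, ⟨le_refl _, hR⟩, by rw [hfp0]; norm_num⟩
  have hνR : ν ≤ R := by
    rw [hν]; exact csSup_le hνne (fun b hb => le_of_lt hb.1.2)
  have hνbdd : BddAbove {t ∈ Set.Ico 0 R | fp t < 0} := ⟨R, fun b hb => le_of_lt hb.1.2⟩
  have hfpneg : ∀ s : ℝ, 0 ≤ s → s < ν → fp s < 0 := by
    intro s hs0 hsν
    obtain ⟨u, hu, hsu⟩ := exists_lt_of_lt_csSup hνne (hν ▸ hsν)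
    have hsR : s ∈ Set.Ico (0:ℝ) R := ⟨hs0, lt_trans hsu hu.1.2⟩
    exact lt_trans (hmono hsR hu.1 hsu) hu.2
  -- ρ facts
  have hρsetne : Set.Nonempty {δ : ℝ | δ ∈ Set.Ioo 0 ν ∧
      ∀ t ∈ Set.Ioo 0 δ, (f t / fp t - t) / t < 1} := by
    by_contra h
    rw [Set.not_nonempty_iff_eq_empty] at h
    rw [h, Real.sSup_empty] at hρ
    exact absurd hρ (by linarith)
  have hρν : ρ ≤ ν := by
    rw [hρ]; exact csSup_le hρsetne (fun b hb => le_of_lt hb.1.2)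
  have hνpos : 0 < ν := lt_of_lt_of_le hρpos hρν
  have hlt1 : ∀ s : ℝ, 0 < s → s < ρ → f s / fp s - s < s := by
    intro s hs0 hsρ
    obtain ⟨δ, hδ, hsδ⟩ := exists_lt_of_lt_csSup hρsetne (hρ ▸ hsρ)
    have := hδ.2 s ⟨hs0, hsδ⟩
    rw [div_lt_one hs0] at this
    exact this
  -- continuity of f
  have hfc : ContinuousOn f (Set.Ico 0 R) := fun u hu => (hderiv u hu).continuousWithinAt
  -- derivative of the boundary function
  have hfderivB : ∀ s : ℝ, 0 < s → s < R → ∀ τ ∈ Set.Ico (0:ℝ) 1,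
      HasDerivWithinAt (fun τ' => τ' * (s * fp s) - f (τ' * s))
        (s * fp s - fp (τ * s) * s) (Set.Ici τ) τ := by
    intro s hs hsR τ hτ
    have h1 : HasDerivWithinAt (fun τ' : ℝ => τ' * (s * fp s)) (s * fp s) (Set.Ici τ) τ := by
      simpa using (hasDerivAt_mul_const (s * fp s)).hasDerivWithinAt (s := Set.Ici τ) (x := τ)
    have hτs : τ * s ∈ Set.Ico (0:ℝ) R :=
      ⟨mul_nonneg hτ.1 hs.le, lt_of_lt_of_le (by nlinarith [hτ.2]) (le_refl R)⟩
    have hc := hderiv (τ * s) hτs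
    have hm : HasDerivWithinAt (fun τ' : ℝ => τ' * s) s
        (Set.Ici τ ∩ Set.Iio (R / s)) τ := (hasDerivAt_mul_const s).hasDerivWithinAt
    have hmaps : Set.MapsTo (fun τ' : ℝ => τ' * s) (Set.Ici τ ∩ Set.Iio (R / s))
        (Set.Ico 0 R) := by
      rintro τ' ⟨h1', h2'⟩
      exact ⟨mul_nonneg (le_trans hτ.1 h1') hs.le, (lt_div_iff₀ hs).1 h2'⟩
    have hcomp := HasDerivWithinAt.comp τ hc hm hmaps
    have hRs : (1:ℝ) < R / s := (one_lt_div hs).2 hsR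
    have hnhds : Set.Iio (R / s) ∈ nhds τ := Iio_mem_nhds (lt_trans hτ.2 hRs)
    rw [hasDerivWithinAt_inter hnhds] at hcomp
    exact h1.sub hcomp
  -- continuity of the boundary function
  have hBcont : ∀ s : ℝ, 0 ≤ s → s < R →
      ContinuousOn (fun τ => τ * (s * fp s) - f (τ * s)) (Set.Icc (0:ℝ) 1) := by
    intro s hs hsR
    have hmaps : Set.MapsTo (fun τ' : ℝ => τ' * s) (Set.Icc (0:ℝ) 1) (Set.Ico 0 R) := by
      intro τ' hτ'
      refine ⟨mul_nonneg hτ'.1 hs, ?_⟩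
      calc τ' * s ≤ 1 * s := mul_le_mul_of_nonneg_right hτ'.2 hs
        _ = s := one_mul s
        _ < R := hsR
    exact ((continuous_id.mul continuous_const).continuousOn).sub
      (hfc.comp ((continuous_id.mul continuous_const).continuousOn) hmaps)
  -- f s ≤ s * fp s
  have hfle : ∀ s : ℝ, 0 ≤ s → s < R → f s ≤ s * fp s := by
    intro s hs hsR
    rcases eq_or_lt_of_le hs with h | h
    · rw [← h, hf0]; simp
    · have key := image_norm_le_of_norm_deriv_right_le_deriv_boundary'
        (f := fun _ : ℝ => (0:ℝ)) (f' := fun _ : ℝ => (0:ℝ)) (a := 0) (b := 1)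
        continuousOn_const
        (fun τ _ => hasDerivWithinAt_const τ _ 0)
        (by simp [hf0])
        (hBcont s hs hsR)
        (hfderivB s h hsR)
        ?_ (Set.right_mem_Icc.2 zero_le_one)
      · have h2 : (0:ℝ) ≤ 1 * (s * fp s) - f (1 * s) := by simpa using key
        rw [one_mul, one_mul] at h2
        linarith
      · intro τ hτ
        simp only [norm_zero]
        have hfpτ : fp (τ * s) ≤ fp s := by
          have hlt : τ * s < s := by nlinarith [hτ.2, hτ.1]
          exact le_of_lt (hmono ⟨mul_nonneg hτ.1 hs, lt_trans hlt hsR⟩ ⟨hs, hsR⟩ hlt)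
        nlinarith
  -- Fp xs is bounded below
  have hpinvB : ∀ u, pinv (Fp xs) (Fp xs u) = u := by
    have hclB : IsClosed ((LinearMap.range (Fp xs : X →ₗ[ℝ] Y) : Submodule ℝ Y) : Set Y) := by
      rw [LinearMap.coe_range]; exact hclosed xs hxs
    have hcompl : CompleteSpace (LinearMap.range (Fp xs : X →ₗ[ℝ] Y)) := hclB.completeSpace_coe
    set Bc : X →L[ℝ] (LinearMap.range (Fp xs : X →ₗ[ℝ] Y)) :=
      (Fp xs).codRestrict (LinearMap.range (Fp xs : X →ₗ[ℝ] Y)) (fun u => LinearMap.mem_range_self _ u)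
      with hBc
    have hk : LinearMap.ker (Bc : X →ₗ[ℝ] (LinearMap.range (Fp xs : X →ₗ[ℝ] Y))) = ⊥ := by
      rw [hBc, ContinuousLinearMap.ker_codRestrict]
      exact LinearMap.ker_eq_bot.2 hinj
    have hr2 : LinearMap.range (Bc : X →ₗ[ℝ] (LinearMap.range (Fp xs : X →ₗ[ℝ] Y))) = ⊤ := by
      rw [LinearMap.range_eq_top]
      rintro ⟨v, hv⟩
      obtain ⟨u, hu⟩ := hv
      exact ⟨u, Subtype.ext hu⟩
    let e2 := ContinuousLinearEquiv.ofBijective Bc hk hr2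
    have hlow0 : ∀ u, ‖u‖ ≤ (‖(e2.symm : (LinearMap.range (Fp xs : X →ₗ[ℝ] Y)) →L[ℝ] X)‖ + 1) * ‖Fp xs u‖ := by
      intro u
      have h1 : ‖u‖ = ‖e2.symm (e2 u)‖ := by rw [e2.symm_apply_apply]
      have h2 : e2 u = Bc u :=
        congrFun (ContinuousLinearEquiv.coeFn_ofBijective Bc hk hr2) u
      have h3 : ‖Bc u‖ = ‖Fp xs u‖ := rfl
      calc ‖u‖ = ‖(e2.symm : (LinearMap.range (Fp xs : X →ₗ[ℝ] Y)) →L[ℝ] X) (e2 u)‖ := h1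
        _ ≤ ‖(e2.symm : (LinearMap.range (Fp xs : X →ₗ[ℝ] Y)) →L[ℝ] X)‖ * ‖e2 u‖ :=
            ContinuousLinearMap.le_opNorm _ _
        _ = ‖(e2.symm : (LinearMap.range (Fp xs : X →ₗ[ℝ] Y)) →L[ℝ] X)‖ * ‖Fp xs u‖ := by rw [h2, h3]
        _ ≤ (‖(e2.symm : (LinearMap.range (Fp xs : X →ₗ[ℝ] Y)) →L[ℝ] X)‖ + 1) * ‖Fp xs u‖ := by
            have := norm_nonneg (Fp xs u); nlinarith
    set M := ‖(e2.symm : (LinearMap.range (Fp xs : X →ₗ[ℝ] Y)) →L[ℝ] X)‖ + 1 with hM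
    have hMpos : 0 < M := by have := norm_nonneg (e2.symm : (LinearMap.range (Fp xs : X →ₗ[ℝ] Y)) →L[ℝ] X); rw [hM]; linarith
    have hlowc : ∀ u, M⁻¹ * ‖u‖ ≤ ‖Fp xs u‖ := by
      intro u
      rw [inv_mul_eq_div, div_le_iff₀ hMpos]
      calc ‖u‖ ≤ M * ‖Fp xs u‖ := hlow0 u
        _ = ‖Fp xs u‖ * M := mul_comm _ _
    exact (pinv_lemma (Fp xs) M⁻¹ (by positivity) hlowc).1
  have hBlow : ∀ u, ‖u‖ ≤ β * ‖Fp xs u‖ := by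
    intro u
    calc ‖u‖ = ‖pinv (Fp xs) (Fp xs u)‖ := by rw [hpinvB]
      _ ≤ ‖pinv (Fp xs)‖ * ‖Fp xs u‖ := ContinuousLinearMap.le_opNorm _ _
      _ = β * ‖Fp xs u‖ := by rw [hβ]
  have hβpos : 0 < β := by
    have hv : x 0 - xs ≠ 0 := sub_ne_zero.2 hx0ne
    have h1 : 0 < ‖x 0 - xs‖ := norm_pos_iff.2 hv
    have h2 := hBlow (x 0 - xs)
    by_contra h
    push_neg at h
    have : β * ‖Fp xs (x 0 - xs)‖ ≤ 0 := mul_nonpos_of_nonpos_of_nonneg h (norm_nonneg _)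
    linarith
  -- the one-step estimate
  have hstep : ∀ y : X, ‖y - xs‖ < r →
      ‖y - pinv (Fp y) (F y) - xs‖ ≤ f ‖y - xs‖ / fp ‖y - xs‖ - ‖y - xs‖ := by
    intro y hyr
    set sy := ‖y - xs‖ with hsy
    have hsy0 : 0 ≤ sy := norm_nonneg _
    have hsyν : sy < ν := lt_of_lt_of_le hyr (le_trans hrρ hρν)
    have hsyR : sy < R := lt_of_lt_of_le hsyν hνR
    have hfpsy : fp sy < 0 := hfpneg sy hsy0 hsyν
    have hfpsyne : fp sy ≠ 0 := ne_of_lt hfpsy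
    have hyκ : y ∈ Metric.ball xs κ := by
      rw [Metric.mem_ball, dist_eq_norm]
      exact lt_of_lt_of_le hyr hrκ
    -- operator lower bound for A := Fp y
    have hAB : β * ‖Fp y - Fp xs‖ ≤ fp sy + 1 := by
      have h := hmaj 0 (by norm_num) y hyκ
      simpa [hfp0] using h
    have hc : (0:ℝ) < (-fp sy) / β := div_pos (neg_pos.2 hfpsy) hβpos
    have hAlow : ∀ u, (-fp sy) / β * ‖u‖ ≤ ‖Fp y u‖ := by
      intro u
      rw [div_mul_eq_mul_div, div_le_iff₀ hβpos]
      have h1 := hBlow u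
      have h2 : ‖Fp xs u‖ ≤ ‖Fp y u‖ + ‖(Fp y - Fp xs) u‖ := by
        have : Fp xs u = Fp y u - (Fp y - Fp xs) u := by
          simp [ContinuousLinearMap.sub_apply]
        rw [this]
        exact norm_sub_le _ _
      have h3 : ‖(Fp y - Fp xs) u‖ ≤ ‖Fp y - Fp xs‖ * ‖u‖ :=
        ContinuousLinearMap.le_opNorm _ _
      nlinarith [mul_le_mul_of_nonneg_left h2 hβpos.le,
        mul_le_mul_of_nonneg_left h3 hβpos.le,
        mul_le_mul_of_nonneg_right hAB (norm_nonneg u)]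
    obtain ⟨hid, hbound⟩ := pinv_lemma (Fp y) ((-fp sy) / β) hc hAlow
    -- Taylor-type bound via fencing
    have hTay : β * ‖F y - Fp y (y - xs)‖ ≤ sy * fp sy - f sy := by
      rcases eq_or_lt_of_le hsy0 with h0 | h0
      · have hyx : y = xs := by
          have : y - xs = 0 := norm_eq_zero.1 h0.symm
          exact sub_eq_zero.1 this
        rw [hyx, hFxs]
        simp [← h0, hf0]
      · set d := y - xs with hd
        have hg : ∀ τ ∈ Set.Icc (0:ℝ) 1,
            HasDerivAt (fun τ' => F (xs + τ' • d) - τ' • (Fp y d))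
              (Fp (xs + τ • d) d - Fp y d) τ := by
          intro τ hτ
          have hz : xs + τ • d ∈ Ω := by
            apply hκball
            rw [Metric.mem_ball, dist_eq_norm]
            have : xs + τ • d - xs = τ • d := by abel
            rw [this, norm_smul, Real.norm_eq_abs, abs_of_nonneg hτ.1]
            calc τ * sy ≤ 1 * sy := mul_le_mul_of_nonneg_right hτ.2 hsy0
              _ = sy := one_mul sy
              _ < κ := lt_of_lt_of_le hyr hrκ
          have h1 : HasDerivAt (fun τ' : ℝ => xs + τ' • d) d τ := by
            simpa using ((hasDerivAt_id τ).smul_const d).const_add xs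
          have h2 : HasDerivAt (fun τ' : ℝ => F (xs + τ' • d)) (Fp (xs + τ • d) d) τ :=
            (hF _ hz).comp_hasDerivAt τ h1
          have h3 : HasDerivAt (fun τ' : ℝ => τ' • (Fp y d)) (Fp y d) τ := by
            simpa using (hasDerivAt_id τ).smul_const (Fp y d)
          exact h2.sub h3
        have hboundg : ∀ τ ∈ Set.Ico (0:ℝ) 1,
            ‖Fp (xs + τ • d) d - Fp y d‖ ≤ (sy * fp sy - fp (τ * sy) * sy) / β := by
          intro τ hτ
          have hm := hmaj τ ⟨hτ.1, hτ.2.le⟩ y hyκ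
          have h4 : ‖Fp (xs + τ • d) d - Fp y d‖ ≤ ‖Fp y - Fp (xs + τ • d)‖ * sy := by
            have : Fp (xs + τ • d) d - Fp y d = -((Fp y - Fp (xs + τ • d)) d) := by
              simp [ContinuousLinearMap.sub_apply]
            rw [this, norm_neg]
            exact ContinuousLinearMap.le_opNorm _ _
          rw [le_div_iff₀ hβpos]
          calc ‖Fp (xs + τ • d) d - Fp y d‖ * β ≤ (‖Fp y - Fp (xs + τ • d)‖ * sy) * β :=
                mul_le_mul_of_nonneg_right h4 hβpos.le
              _ = (β * ‖Fp y - Fp (xs + τ • d)‖) * sy := by ring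
              _ ≤ (fp sy - fp (τ * sy)) * sy := mul_le_mul_of_nonneg_right hm hsy0
              _ = sy * fp sy - fp (τ * sy) * sy := by ring
        have key := image_norm_le_of_norm_deriv_right_le_deriv_boundary'
          (f := fun τ' => F (xs + τ' • d) - τ' • (Fp y d))
          (f' := fun τ' => Fp (xs + τ' • d) d - Fp y d)
          (a := 0) (b := 1)
          (fun τ hτ => (hg τ hτ).continuousAt.continuousWithinAt)
          (fun τ hτ => (hg τ ⟨hτ.1, hτ.2.le⟩).hasDerivWithinAt.mono
            (fun u hu => Set.mem_Ici.2 (Set.mem_Ici.1 hu)))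
          (by simp [hFxs, hf0])
          (B := fun τ => (τ * (sy * fp sy) - f (τ * sy)) / β)
          (B' := fun τ => (sy * fp sy - fp (τ * sy) * sy) / β)
          ((hBcont sy hsy0 hsyR).div_const β)
          (fun τ hτ => ((hfderivB sy h0 hsyR τ hτ).div_const β))
          hboundg (Set.right_mem_Icc.2 zero_le_one)
        have hval : ‖F (xs + (1:ℝ) • d) - (1:ℝ) • (Fp y d)‖ ≤
            ((1:ℝ) * (sy * fp sy) - f ((1:ℝ) * sy)) / β := key
        rw [one_smul, one_smul, one_mul, one_mul] at hval
        have hxsd : xs + d = y := by rw [hd]; abel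
        rw [hxsd] at hval
        calc β * ‖F y - Fp y (y - xs)‖ = ‖F y - Fp y d‖ * β := by rw [← hd]; ring
          _ ≤ ((sy * fp sy - f sy) / β) * β := mul_le_mul_of_nonneg_right hval hβpos.le
          _ = sy * fp sy - f sy := div_mul_cancel₀ _ (ne_of_gt hβpos)
    -- conclude
    have heq : y - pinv (Fp y) (F y) - xs = pinv (Fp y) (Fp y (y - xs) - F y) := by
      rw [map_sub, hid]
      abel
    rw [heq]
    have h5 : ‖Fp y (y - xs) - F y‖ ≤ (sy * fp sy - f sy) / β := by
      rw [norm_sub_rev, le_div_iff₀ hβpos, mul_comm]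
      exact hTay
    calc ‖pinv (Fp y) (Fp y (y - xs) - F y)‖ ≤ ‖Fp y (y - xs) - F y‖ / ((-fp sy) / β) :=
        hbound _
      _ ≤ ((sy * fp sy - f sy) / β) / ((-fp sy) / β) := by
          gcongr
      _ = f sy / fp sy - sy := by
          have hβne : β ≠ 0 := ne_of_gt hβpos
          have hne : -fp sy ≠ 0 := ne_of_gt (neg_pos.2 hfpsy)
          field_simp
          ring
  -- properties of the error function
  have hqpos : (0:ℝ) < p + 1 := by linarith
  have het0 : ∀ s : ℝ, 0 ≤ s → s < ν → 0 ≤ f s / fp s - s := by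
    intro s h0 hν'
    have hfp := hfpneg s h0 hν'
    have hle := hfle s h0 (lt_of_lt_of_le hν' hνR)
    rw [sub_nonneg, le_div_iff_of_neg hfp]
    linarith
  have hcoef : ∀ a b : ℝ, 0 < a → a ≤ b → b < ν →
      (f a / fp a - a) / a ^ (p + 1) ≤ (f b / fp b - b) / b ^ (p + 1) := by
    intro a b ha hab hb
    exact h3.monotoneOn ⟨ha, lt_of_le_of_lt hab hb⟩ ⟨lt_of_lt_of_le ha hab, hb⟩ hab
  have hemono : ∀ a b : ℝ, 0 ≤ a → a ≤ b → b < ν →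
      f a / fp a - a ≤ f b / fp b - b := by
    intro a b ha hab hb
    rcases eq_or_lt_of_le ha with h0 | h0
    · have : f 0 / fp 0 - 0 = 0 := by rw [hf0]; simp
      rw [← h0, this]
      exact het0 b (le_trans ha hab) hb
    · have hbpos : 0 < b := lt_of_lt_of_le h0 hab
      have haq : (0:ℝ) < a ^ (p + 1) := Real.rpow_pos_of_pos h0 _
      have hbq : (0:ℝ) < b ^ (p + 1) := Real.rpow_pos_of_pos hbpos _
      have hqle : a ^ (p + 1) ≤ b ^ (p + 1) := Real.rpow_le_rpow h0.le hab hqpos.le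
      have hco := hcoef a b h0 hab hb
      have hcb : 0 ≤ (f b / fp b - b) / b ^ (p + 1) :=
        div_nonneg (het0 b hbpos.le hb) hbq.le
      calc f a / fp a - a = ((f a / fp a - a) / a ^ (p + 1)) * a ^ (p + 1) := by
            rw [div_mul_cancel₀ _ (ne_of_gt haq)]
        _ ≤ ((f b / fp b - b) / b ^ (p + 1)) * a ^ (p + 1) :=
            mul_le_mul_of_nonneg_right hco haq.le
        _ ≤ ((f b / fp b - b) / b ^ (p + 1)) * b ^ (p + 1) :=
            mul_le_mul_of_nonneg_left hqle hcb
        _ = f b / fp b - b := by rw [div_mul_cancel₀ _ (ne_of_gt hbq)]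
  -- the scalar sequence
  have ht0pos : 0 < t 0 := by
    rw [ht0]
    exact norm_pos_iff.2 (sub_ne_zero.2 hx0ne)
  have ht0r : t 0 < r := by
    rw [ht0, ← dist_eq_norm]
    exact Metric.mem_ball.1 hx0
  have ht0ν : t 0 < ν := lt_of_lt_of_le ht0r (le_trans hrρ hρν)
  have hts : ∀ k, 0 ≤ t k ∧ t k ≤ t 0 := by
    intro k
    induction k with
    | zero => exact ⟨ht0pos.le, le_refl _⟩
    | succ k ih =>
      have htkν : t k < ν := lt_of_le_of_lt ih.2 ht0ν
      have hetk := het0 (t k) ih.1 htkν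
      have habs : t (k + 1) = f (t k) / fp (t k) - t k := by
        rw [htrec k, abs_of_nonpos (by linarith)]
        ring
      constructor
      · rw [habs]; exact hetk
      · rw [habs]
        rcases eq_or_lt_of_le ih.1 with h0 | h0
        · rw [← h0, hf0, hfp0]
          simpa using ht0pos.le
        · have := hlt1 (t k) h0 (lt_of_le_of_lt ih.2 (lt_of_lt_of_le ht0r hrρ))
          linarith [ih.2]
  have htk1 : ∀ k, t (k + 1) = f (t k) / fp (t k) - t k := by
    intro k
    have ih := hts k
    have htkν : t k < ν := lt_of_le_of_lt ih.2 ht0ν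
    have hetk := het0 (t k) ih.1 htkν
    rw [htrec k, abs_of_nonpos (by linarith)]
    ring
  -- the main induction
  have hxk : ∀ k, ‖x k - xs‖ ≤ t k := by
    intro k
    induction k with
    | zero => rw [ht0]
    | succ k ih =>
      have htkν : t k < ν := lt_of_le_of_lt (hts k).2 ht0ν
      have hskr : ‖x k - xs‖ < r := lt_of_le_of_lt (le_trans ih (hts k).2) ht0r
      have h1 := hstep (x k) hskr
      rw [hxrec k, htk1 k]
      calc ‖x k - pinv (Fp (x k)) (F (x k)) - xs‖ ≤
          f ‖x k - xs‖ / fp ‖x k - xs‖ - ‖x k - xs‖ := h1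
        _ ≤ f (t k) / fp (t k) - t k := hemono _ _ (norm_nonneg _) ih htkν
  refine ⟨hxk, ?_⟩
  intro k
  have htkν : t k < ν := lt_of_le_of_lt (hts k).2 ht0ν
  have hskr : ‖x k - xs‖ < r := lt_of_le_of_lt (le_trans (hxk k) (hts k).2) ht0r
  have h1 := hstep (x k) hskr
  rcases eq_or_lt_of_le (norm_nonneg (x k - xs)) with h0 | h0
  · -- ‖x k - xs‖ = 0
    have hz : ‖x k - xs‖ ^ (p + 1) = 0 := by
      rw [← h0, Real.zero_rpow (ne_of_gt hqpos)]
    constructor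
    · rw [hz, mul_zero]
      have he0 : f ‖x k - xs‖ / fp ‖x k - xs‖ - ‖x k - xs‖ = 0 := by
        rw [← h0, hf0]; simp
      rw [hxrec k]
      calc ‖x k - pinv (Fp (x k)) (F (x k)) - xs‖ ≤
          f ‖x k - xs‖ / fp ‖x k - xs‖ - ‖x k - xs‖ := h1
        _ = 0 := he0
    · rw [hz, mul_zero, mul_zero]
  · -- ‖x k - xs‖ > 0
    have hsk := h0
    have htkpos : 0 < t k := lt_of_lt_of_le hsk (hxk k)
    have hskq : (0:ℝ) < ‖x k - xs‖ ^ (p + 1) := Real.rpow_pos_of_pos hsk _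
    have hco := hcoef ‖x k - xs‖ (t k) hsk (hxk k) htkν
    constructor
    · rw [hxrec k, htk1 k]
      calc ‖x k - pinv (Fp (x k)) (F (x k)) - xs‖ ≤
          f ‖x k - xs‖ / fp ‖x k - xs‖ - ‖x k - xs‖ := h1
        _ = ((f ‖x k - xs‖ / fp ‖x k - xs‖ - ‖x k - xs‖) / ‖x k - xs‖ ^ (p + 1)) *
            ‖x k - xs‖ ^ (p + 1) := by rw [div_mul_cancel₀ _ (ne_of_gt hskq)]
        _ ≤ ((f (t k) / fp (t k) - t k) / t k ^ (p + 1)) * ‖x k - xs‖ ^ (p + 1) :=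
            mul_le_mul_of_nonneg_right hco hskq.le
    · rw [htk1 k, htk1 0]
      have hco2 := hcoef (t k) (t 0) htkpos (hts k).2 ht0ν
      exact mul_le_mul_of_nonneg_right hco2 hskq.le
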